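/- Let K be a field, A = K[x_1,…,x_n] with n > 1, and let 1 ≤ r ≤ d be integers such that the image of the integer d!/(d-r)! in K is nonzero. If T_0 is a subspace of A_1 intersecting each of r subspaces T_1, …, T_r of A_1 only in 0, then ⟨T_0^d⟩ ∩ (⟨T_1^d⟩ + ⋯ + ⟨T_r^d⟩) = 0 in A_d. -/

import Mathlib

open MvPolynomial

namespace PowerSubspaceAux

variable {K : Type*} [Field K] {n : ℕ}

local notation "A" => MvPolynomial (Fin n) K

lemma degree_one_single {d : Fin n →₀ ℕ} (hd : Finsupp.degree d = 1) :
    ∃ i, d = Finsupp.single i 1 := by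
  have h0 : d ≠ 0 := by rintro rfl; simp [map_zero] at hd
  obtain ⟨i, hi⟩ := Finsupp.support_nonempty_iff.mpr h0
  have hile : d i ≤ 1 := hd ▸ Finsupp.le_degree i d
  have hi1 : d i = 1 :=
    le_antisymm hile (Nat.one_le_iff_ne_zero.mpr (Finsupp.mem_support_iff.mp hi))
  refine ⟨i, ?_⟩
  ext j
  rcases eq_or_ne j i with rfl | hne
  · simp [hi1]
  · rw [Finsupp.single_apply, if_neg (fun h => hne h.symm)]
    by_contra hj0
    have hj : j ∈ d.support := Finsupp.mem_support_iff.mpr hj0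
    have hsub : ({i, j} : Finset (Fin n)) ⊆ d.support := by
      intro a ha
      rcases Finset.mem_insert.mp ha with rfl | ha
      · exact hi
      · rw [Finset.mem_singleton] at ha; subst ha; exact hj
    have hle2 : d i + d j ≤ Finsupp.degree d := by
      unfold Finsupp.degree
      calc d i + d j = ∑ a ∈ ({i, j} : Finset (Fin n)), d a :=
            (Finset.sum_pair (fun h => hne h.symm)).symm
        _ ≤ _ := Finset.sum_le_sum_of_subset hsub
    omega

lemma hom1_le_span :
    homogeneousSubmodule (Fin n) K 1 ≤ Submodule.span K (Set.range (X : Fin n → A)) := by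
  intro f hf
  rw [mem_homogeneousSubmodule] at hf
  rw [← f.support_sum_monomial_coeff]
  apply Submodule.sum_mem
  intro v hv
  have hdeg : Finsupp.degree v = 1 := by
    have := hf (MvPolynomial.mem_support_iff.mp hv)
    rw [Finsupp.degree_eq_weight_one]; exact this
  obtain ⟨i, rfl⟩ := degree_one_single hdeg
  have hmon : monomial (Finsupp.single i 1) (coeff (Finsupp.single i 1) f)
      = (coeff (Finsupp.single i 1) f) • (X i : A) := by
    rw [smul_eq_C_mul, X, C_mul_monomial, mul_one]
  rw [hmon]
  exact Submodule.smul_mem _ _ (Submodule.subset_span ⟨i, rfl⟩)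

/-- The derivation attached to a linear functional. -/
noncomputable def Dv (lam : A →ₗ[K] K) : Derivation K A A :=
  mkDerivation K (fun i => (C (lam (X i)) : A))

lemma Dv_span (lam : A →ₗ[K] K) {t : A}
    (ht : t ∈ Submodule.span K (Set.range (X : Fin n → A))) : Dv lam t = C (lam t) := by
  induction ht using Submodule.span_induction with
  | mem x hx => obtain ⟨i, rfl⟩ := hx; exact mkDerivation_X _ _ _
  | zero => simp
  | add x y hx hy ihx ihy => rw [map_add, ihx, ihy, map_add, map_add]
  | smul c x hx ihx =>
      rw [(Dv lam).map_smul, ihx, map_smul, smul_eq_mul, C_mul, ← smul_eq_C_mul]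

lemma Dv_hom1 (lam : A →ₗ[K] K) {t : A} (ht : t ∈ homogeneousSubmodule (Fin n) K 1) :
    Dv lam t = C (lam t) := Dv_span lam (hom1_le_span ht)

lemma mem_pow_zero_of_C (k : K) {T : Submodule K A} : (C k : A) ∈ T ^ 0 := by
  rw [pow_zero]
  have h : (algebraMap K A) k ∈ (1 : Submodule K A) := Submodule.algebraMap_mem k
  rwa [MvPolynomial.algebraMap_eq] at h

lemma Dv_mem_pow (lam : A →ₗ[K] K) {T : Submodule K A}
    (hT : T ≤ homogeneousSubmodule (Fin n) K 1) :
    ∀ (m : ℕ) {f : A}, f ∈ T ^ (m + 1) → Dv lam f ∈ T ^ m := by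
  intro m
  induction m with
  | zero =>
    intro f hf
    rw [pow_one] at hf
    rw [Dv_hom1 lam (hT hf)]
    exact mem_pow_zero_of_C _
  | succ m ih =>
    intro f hf
    rw [pow_succ] at hf
    refine Submodule.mul_induction_on hf (fun g hg t ht => ?_) (fun x y hx hy => ?_)
    · rw [Derivation.leibniz]
      apply Submodule.add_mem
      · rw [Dv_hom1 lam (hT ht), smul_eq_mul, mul_comm, ← smul_eq_C_mul]
        exact Submodule.smul_mem _ _ hg
      · rw [smul_eq_mul, pow_succ']
        exact Submodule.mul_mem_mul ht (ih hg)
    · rw [map_add]; exact Submodule.add_mem _ hx hy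

lemma Dv_kill (lam : A →ₗ[K] K) {T : Submodule K A}
    (hT : T ≤ homogeneousSubmodule (Fin n) K 1) (hlam : ∀ t ∈ T, lam t = 0) :
    ∀ (m : ℕ) {f : A}, f ∈ T ^ (m + 1) → Dv lam f = 0 := by
  intro m
  induction m with
  | zero =>
    intro f hf
    rw [pow_one] at hf
    rw [Dv_hom1 lam (hT hf), hlam f hf, map_zero]
  | succ m ih =>
    intro f hf
    rw [pow_succ] at hf
    refine Submodule.mul_induction_on hf (fun g hg t ht => ?_) (fun x y hx hy => ?_)
    · rw [Derivation.leibniz, Dv_hom1 lam (hT ht), hlam t ht, map_zero, smul_zero, zero_add,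
        ih hg, smul_zero]
    · rw [map_add, hx, hy, add_zero]

lemma euler_identity {T₀ : Submodule K A}
    (hT₀ : T₀ ≤ homogeneousSubmodule (Fin n) K 1)
    {N : ℕ} (e : Fin N → A) (lam : Fin N → (A →ₗ[K] K))
    (hrepr : ∀ t ∈ T₀, ∑ a, lam a t • e a = t) :
    ∀ (m : ℕ) {f : A}, f ∈ T₀ ^ m → ∑ a, e a * Dv (lam a) f = (m : K) • f := by
  intro m
  induction m with
  | zero =>
    intro f hf
    rw [pow_zero] at hf
    obtain ⟨k, rfl⟩ := Submodule.mem_one.mp hf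
    rw [MvPolynomial.algebraMap_eq]
    simp [Dv]
  | succ m ih =>
    intro f hf
    rw [pow_succ'] at hf
    refine Submodule.mul_induction_on hf (fun t ht g hg => ?_) (fun x y hx hy => ?_)
    · have expand : ∑ a, e a * Dv (lam a) (t * g)
          = (∑ a, lam a t • e a) * g + t * ∑ a, e a * Dv (lam a) g := by
        rw [Finset.sum_mul, Finset.mul_sum, ← Finset.sum_add_distrib]
        refine Finset.sum_congr rfl fun a _ => ?_
        rw [Derivation.leibniz, Dv_hom1 _ (hT₀ ht)]
        simp only [smul_eq_mul, MvPolynomial.smul_eq_C_mul]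
        ring
      rw [expand, hrepr t ht, ih hg, mul_smul_comm]
      push_cast
      rw [add_smul, one_smul, add_comm]
    · simp only [map_add, mul_add, Finset.sum_add_distrib, hx, hy, smul_add]

lemma exists_proj {T₀ T' : Submodule K A} (hmeet : T₀ ⊓ T' = ⊥) :
    ∃ π : A →ₗ[K] T₀, (∀ t ∈ T', π t = 0) ∧ (∀ t (ht : t ∈ T₀), (π t : A) = t) := by
  set q := T'.mkQ with hq
  set φ : T₀ →ₗ[K] (MvPolynomial (Fin n) K ⧸ T') := q.comp T₀.subtype with hφ
  have hinj : Function.Injective φ := by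
    rw [← LinearMap.ker_eq_bot]
    rw [Submodule.eq_bot_iff]
    rintro ⟨x, hx⟩ hker
    have hx' : x ∈ T' := by
      have : q x = 0 := hker
      rwa [hq, Submodule.mkQ_apply, Submodule.Quotient.mk_eq_zero] at this
    have : x ∈ T₀ ⊓ T' := ⟨hx, hx'⟩
    rw [hmeet, Submodule.mem_bot] at this
    exact Subtype.ext this
  set e := LinearEquiv.ofInjective φ hinj with he
  obtain ⟨g, hg⟩ := LinearMap.exists_extend (e.symm : (LinearMap.range φ) →ₗ[K] T₀)
  refine ⟨g.comp q, fun t ht => ?_, fun t ht => ?_⟩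
  · have hzero : q t = 0 := by
      rw [hq, Submodule.mkQ_apply, Submodule.Quotient.mk_eq_zero]; exact ht
    simp [hzero]
  · have h1 : q t = ((e ⟨t, ht⟩ : LinearMap.range φ) : MvPolynomial (Fin n) K ⧸ T') := by
      rw [he, LinearEquiv.ofInjective_apply]
      rfl
    have h3 : (g.comp q) t = ⟨t, ht⟩ := by
      calc (g.comp q) t = g ((LinearMap.range φ).subtype (e ⟨t, ht⟩)) := by
            rw [LinearMap.comp_apply, h1]; rfl
        _ = (g ∘ₗ (LinearMap.range φ).subtype) (e ⟨t, ht⟩) := rfl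
        _ = e.symm (e ⟨t, ht⟩) := by rw [hg]; rfl
        _ = ⟨t, ht⟩ := e.symm_apply_apply _
    rw [h3]

lemma vanish {T₀ T' : Submodule K A}
    (hT₀ : T₀ ≤ homogeneousSubmodule (Fin n) K 1) (hmeet : T₀ ⊓ T' = ⊥)
    {m : ℕ} (hm : ((m : ℕ) : K) ≠ 0) {f : A} (hf : f ∈ T₀ ^ m)
    (hD : ∀ lam : A →ₗ[K] K, (∀ t ∈ T', lam t = 0) → Dv lam f = 0) : f = 0 := by
  haveI : FiniteDimensional K (Submodule.span K (Set.range (X : Fin n → A))) :=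
    FiniteDimensional.span_of_finite K (Set.finite_range _)
  haveI : FiniteDimensional K T₀ :=
    Submodule.finiteDimensional_of_le (hT₀.trans hom1_le_span)
  obtain ⟨π, hπ0, hπid⟩ := exists_proj hmeet
  set b := Module.finBasis K T₀ with hb
  set lam : Fin (Module.finrank K T₀) → (A →ₗ[K] K) :=
    fun a => (b.coord a).comp π with hlam
  have hrepr : ∀ t ∈ T₀, ∑ a, lam a t • ((b a : A)) = t := by
    intro t ht
    have hπt : π t = ⟨t, ht⟩ := Subtype.ext (hπid t ht)
    have hsum : ∑ a, b.repr ⟨t, ht⟩ a • (b a) = (⟨t, ht⟩ : T₀) := b.sum_repr _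
    calc ∑ a, lam a t • ((b a : A))
        = ((∑ a, b.repr ⟨t, ht⟩ a • (b a) : T₀) : A) := by
          rw [Submodule.coe_sum]
          refine Finset.sum_congr rfl fun a _ => ?_
          rw [hlam]
          simp [hπt]
      _ = t := by rw [hsum]
  have h1 : ∑ a, (b a : A) * Dv (lam a) f = (m : K) • f :=
    euler_identity hT₀ _ _ hrepr m hf
  have h2 : ∀ a, Dv (lam a) f = 0 := by
    intro a
    refine hD _ fun t ht => ?_
    have : π t = 0 := hπ0 t ht
    simp [hlam, this]
  rw [Finset.sum_eq_zero (fun a _ => by rw [h2 a, mul_zero])] at h1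
  have := h1.symm
  rcases smul_eq_zero.mp this with h | h
  · exact absurd h hm
  · exact h

lemma main_induction {r : ℕ} (T₀ : Submodule K A) (T : Fin r → Submodule K A)
    (hT₀ : T₀ ≤ homogeneousSubmodule (Fin n) K 1)
    (hT : ∀ j, T j ≤ homogeneousSubmodule (Fin n) K 1)
    (hmeet : ∀ j, T₀ ⊓ T j = ⊥) :
    ∀ (k m : ℕ) (s : Finset (Fin r)), s.card = k → k ≤ m →
      (∀ i, i < k → ((m - i : ℕ) : K) ≠ 0) →
      ∀ f, f ∈ T₀ ^ m → f ∈ s.sup (fun j => T j ^ m) → f = 0 := by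
  intro k
  induction k with
  | zero =>
    intro m s hs _ _ f _ hfs
    rw [Finset.card_eq_zero.mp hs, Finset.sup_empty] at hfs
    exact (Submodule.mem_bot K).mp hfs
  | succ k ih =>
    intro m s hs hkm hcond f hf0 hfs
    obtain ⟨m', rfl⟩ : ∃ m', m = m' + 1 := ⟨m - 1, by omega⟩
    obtain ⟨j₀, hj₀⟩ := Finset.card_pos.mp (by omega : 0 < s.card)
    rw [← Finset.insert_erase hj₀, Finset.sup_insert] at hfs
    obtain ⟨g, hg, h, hh, rfl⟩ := Submodule.mem_sup.mp hfs
    have hDf : ∀ lam : A →ₗ[K] K, (∀ t ∈ T j₀, lam t = 0) → Dv lam (g + h) = 0 := by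
      intro lam hlam
      have hDg : Dv lam g = 0 := Dv_kill lam (hT j₀) hlam m' hg
      have hDh : Dv lam h ∈ (s.erase j₀).sup (fun j => T j ^ m') := by
        have hle : (s.erase j₀).sup (fun j => T j ^ (m' + 1)) ≤
            Submodule.comap (Dv lam).toLinearMap ((s.erase j₀).sup fun j => T j ^ m') := by
          refine Finset.sup_le fun j hj => ?_
          intro x hx
          exact Submodule.mem_comap.mpr
            (SetLike.le_def.mp (Finset.le_sup (f := fun j => T j ^ m') hj) (Dv_mem_pow lam (hT j) m' hx))
        exact hle hh
      have hDfmem0 : Dv lam (g + h) ∈ T₀ ^ m' := Dv_mem_pow lam hT₀ m' hf0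
      have hDfmems : Dv lam (g + h) ∈ (s.erase j₀).sup fun j => T j ^ m' := by
        rw [map_add, hDg, zero_add]; exact hDh
      exact ih m' (s.erase j₀) (by rw [Finset.card_erase_of_mem hj₀, hs]; omega) (by omega)
        (fun i hi => by
          have hc := hcond (i + 1) (by omega)
          rwa [Nat.succ_sub_succ] at hc) _ hDfmem0 hDfmems
    exact vanish hT₀ (hmeet j₀)
      (by simpa using hcond 0 (Nat.succ_pos k)) hf0 hDf

end PowerSubspaceAux

open PowerSubspaceAux in
/-- If `d!/(d-r)! ≠ 0` in `K` and `T_0` is a subspace of `A_1` intersecting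
each of `r` subspaces `T_1, …, T_r` of `A_1` only in `0`, then
`⟨T_0^d⟩ ∩ (⟨T_1^d⟩ + ⋯ + ⟨T_r^d⟩) = 0`.  Here `T ^ d` is the subspace
spanned by all products of `d` elements of `T`. -/
theorem power_subspace_almost_independence (K : Type*) [Field K] (n d r : ℕ)
    (hn : 1 < n) (hr : 1 ≤ r) (hrd : r ≤ d)
    (hfac : ((d.factorial / (d - r).factorial : ℕ) : K) ≠ 0)
    (T₀ : Submodule K (MvPolynomial (Fin n) K))
    (T : Fin r → Submodule K (MvPolynomial (Fin n) K))
    (hT₀ : T₀ ≤ homogeneousSubmodule (Fin n) K 1)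
    (hT : ∀ j, T j ≤ homogeneousSubmodule (Fin n) K 1)
    (hmeet : ∀ j, T₀ ⊓ T j = ⊥) :
    (T₀ ^ d) ⊓ (⨆ j, T j ^ d) = ⊥ := by
  have hdesc : ((d.descFactorial r : ℕ) : K) ≠ 0 := by
    rwa [Nat.descFactorial_eq_div hrd]
  have hcond : ∀ i, i < r → ((d - i : ℕ) : K) ≠ 0 := by
    intro i hi h0
    apply hdesc
    rw [Nat.descFactorial_eq_prod_range, Nat.cast_prod]
    exact Finset.prod_eq_zero (Finset.mem_range.mpr hi) h0
  rw [eq_bot_iff]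
  intro f hf
  obtain ⟨hf0, hfs⟩ := Submodule.mem_inf.mp hf
  rw [Submodule.mem_bot]
  have hsup : (⨆ j, T j ^ d) = (Finset.univ : Finset (Fin r)).sup fun j => T j ^ d := by
    rw [Finset.sup_eq_iSup]
    simp
  exact main_induction T₀ T hT₀ hT hmeet r d Finset.univ (Finset.card_univ.trans (Fintype.card_fin r))
    hrd hcond f hf0 (hsup ▸ hfs)
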